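/- The convex conjugate of the softmax loss L(u) = log(sum_{j=1}^m exp(u_j - u_y)) (as a function of u ∈ R^m for fixed label y) is L*(v) = sum_{j ≠ y} v_j log v_j + (1 + v_y) log(1 + v_y) if ⟨1, v⟩ = 0 and the vector (v_j)_{j≠y} lies in the set Δ = {x : ⟨1,x⟩ ≤ 1, 0 ≤ x_j ≤ 1 for all j}, and L*(v) = +∞ otherwise. -/

import Mathlib

open Finset

lemma auxSupTop {ι : Type*} (f : ι → ℝ) (h : ∀ M : ℝ, ∃ u, M ≤ f u) :
    (⨆ u : ι, ((f u : ℝ) : EReal)) = ⊤ := by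
  rw [iSup_eq_top]
  intro b hb
  induction b using EReal.rec with
  | bot =>
    obtain ⟨u, _⟩ := h 0
    exact ⟨u, EReal.bot_lt_coe _⟩
  | coe b =>
    obtain ⟨u, hu⟩ := h (b + 1)
    exact ⟨u, by exact_mod_cast lt_of_lt_of_le (lt_add_one b) hu⟩
  | top => exact absurd hb (lt_irrefl _)

lemma auxERealCases (c : EReal) : c = ⊥ ∨ (∃ r : ℝ, c = (r : EReal)) ∨ c = ⊤ := by
  induction c using EReal.rec with
  | bot => exact Or.inl rfl
  | coe r => exact Or.inr (Or.inl ⟨r, rfl⟩)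
  | top => exact Or.inr (Or.inr rfl)

/-- Gibbs: for a probability vector `p` and any `w`,
`∑ p w - ∑ p log p ≤ log ∑ exp w`. -/
lemma auxGibbs {m : ℕ} [NeZero m] (p w : Fin m → ℝ) (hp : ∀ j, 0 ≤ p j)
    (hps : ∑ j, p j = 1) :
    ∑ j, p j * w j - ∑ j, p j * Real.log (p j) ≤ Real.log (∑ j, Real.exp (w j)) := by
  set z : Fin m → ℝ := fun j => if p j = 0 then 0 else Real.exp (w j) / p j with hz
  have hznn : ∀ j ∈ Finset.univ, (0:ℝ) ≤ z j := by
    intro j _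
    simp only [hz]
    split
    · exact le_refl 0
    · exact div_nonneg (Real.exp_pos _).le (hp _)
  have key := Real.geom_mean_le_arith_mean_weighted Finset.univ p z
    (fun j _ => hp j) hps hznn
  have prodeq : ∏ j, z j ^ p j = Real.exp (∑ j, p j * (w j - Real.log (p j))) := by
    rw [Real.exp_sum]
    refine Finset.prod_congr rfl fun j _ => ?_
    by_cases h0 : p j = 0
    · simp [hz, h0]
    · have hpj : 0 < p j := lt_of_le_of_ne (hp j) (Ne.symm h0)
      have hzj : z j = Real.exp (w j) / p j := by simp [hz, h0]
      rw [hzj, Real.rpow_def_of_pos (by positivity), Real.log_div (Real.exp_ne_zero _) h0,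
        Real.log_exp, mul_comm]
  have sumle : ∑ j, p j * z j ≤ ∑ j, Real.exp (w j) := by
    refine Finset.sum_le_sum fun j _ => ?_
    by_cases h0 : p j = 0
    · simp [hz, h0]; positivity
    · have : z j = Real.exp (w j) / p j := by simp [hz, h0]
      rw [this, mul_div_cancel₀ _ h0]
  have hpos : (0:ℝ) < ∑ j, Real.exp (w j) :=
    Finset.sum_pos (fun j _ => Real.exp_pos _) Finset.univ_nonempty
  have hcomb := le_trans (prodeq ▸ key) sumle
  have hle : ∑ j, p j * (w j - Real.log (p j)) ≤ Real.log (∑ j, Real.exp (w j)) :=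
    (Real.le_log_iff_exp_le hpos).mpr hcomb
  calc ∑ j, p j * w j - ∑ j, p j * Real.log (p j)
      = ∑ j, p j * (w j - Real.log (p j)) := by
        rw [← Finset.sum_sub_distrib]; exact Finset.sum_congr rfl fun j _ => by ring
    _ ≤ _ := hle

/-- The convex conjugate of the softmax loss `u ↦ log (∑ j exp (u j - u y))`
is `v ↦ ∑_{j ≠ y} v j log (v j) + (1 + v y) log (1 + v y)` if `⟨1, v⟩ = 0` and
`(v j)_{j ≠ y}` lies in `Δ = {x : ⟨1,x⟩ ≤ 1, 0 ≤ x j ≤ 1}`, and `+∞`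
otherwise. -/
theorem stmt11 (m : ℕ) (y : Fin m) (v : Fin m → ℝ) :
    (⨆ u : Fin m → ℝ,
        ((∑ j, u j * v j - Real.log (∑ j, Real.exp (u j - u y)) : ℝ) : EReal)) =
      if (∑ j, v j = 0) ∧ (∑ j ∈ Finset.univ.erase y, v j ≤ 1) ∧
          (∀ j, j ≠ y → 0 ≤ v j ∧ v j ≤ 1) then
        (((∑ j ∈ Finset.univ.erase y, v j * Real.log (v j))
            + (1 + v y) * Real.log (1 + v y) : ℝ) : EReal)
      else ⊤ := by
  have hm : 0 < m := y.pos
  haveI : NeZero m := ⟨hm.ne'⟩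
  have hm' : (0:ℝ) < (m:ℝ) := by exact_mod_cast hm
  have logsum : ∀ (a : Fin m → ℝ) (A : ℝ), (∀ i, a i ≤ A) →
      Real.log (∑ i, Real.exp (a i)) ≤ Real.log m + A := by
    intro a A hA
    have h1 : ∑ i, Real.exp (a i) ≤ (m:ℝ) * Real.exp A := by
      calc ∑ i, Real.exp (a i) ≤ ∑ _i : Fin m, Real.exp A :=
            Finset.sum_le_sum fun i _ => Real.exp_le_exp.mpr (hA i)
        _ = (m:ℝ) * Real.exp A := by
            simp [Finset.sum_const, nsmul_eq_mul, Finset.card_univ]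
    calc Real.log (∑ i, Real.exp (a i)) ≤ Real.log ((m:ℝ) * Real.exp A) :=
          Real.log_le_log (Finset.sum_pos (fun i _ => Real.exp_pos _) Finset.univ_nonempty) h1
      _ = Real.log m + A := by
          rw [Real.log_mul (by positivity) (Real.exp_ne_zero _), Real.log_exp]
  by_cases hP : (∑ j, v j = 0) ∧ (∑ j ∈ Finset.univ.erase y, v j ≤ 1) ∧
      (∀ j, j ≠ y → 0 ≤ v j ∧ v j ≤ 1)
  · -- main case
    obtain ⟨hA, hB, hC⟩ := hP
    rw [if_pos ⟨hA, hB, hC⟩]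
    set p : Fin m → ℝ := fun j => if j = y then 1 + v y else v j with hpdef
    have hAe : v y + ∑ j ∈ Finset.univ.erase y, v j = 0 := by
      rw [Finset.add_sum_erase _ v (Finset.mem_univ y)]; exact hA
    have hpy : p y = 1 + v y := if_pos rfl
    have hpj : ∀ j ∈ Finset.univ.erase y, p j = v j := fun j hj =>
      if_neg (Finset.ne_of_mem_erase hj)
    have hpnn : ∀ j, 0 ≤ p j := by
      intro j
      by_cases hj : j = y
      · subst hj; rw [hpy]; linarith
      · rw [hpdef]; simp only [if_neg hj]; exact (hC j hj).1
    have hps : ∑ j, p j = 1 := by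
      rw [← Finset.add_sum_erase _ p (Finset.mem_univ y), hpy,
        Finset.sum_congr rfl hpj]
      linarith
    set S := ∑ j, p j * Real.log (p j) with hSdef
    have hSeq : (∑ j ∈ Finset.univ.erase y, v j * Real.log (v j))
        + (1 + v y) * Real.log (1 + v y) = S := by
      have hcong : ∑ j ∈ Finset.univ.erase y, p j * Real.log (p j)
          = ∑ j ∈ Finset.univ.erase y, v j * Real.log (v j) :=
        Finset.sum_congr rfl fun j hj => by rw [hpj j hj]
      rw [hSdef, ← Finset.add_sum_erase _ (fun j => p j * Real.log (p j))
        (Finset.mem_univ y), hpy, hcong]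
      ring
    rw [hSeq]
    have hub : ∀ u : Fin m → ℝ,
        ∑ j, u j * v j - Real.log (∑ j, Real.exp (u j - u y)) ≤ S := by
      intro u
      have e1 : ∑ j, p j * (u j - u y) = ∑ j, p j * u j - u y := by
        have : ∑ j, p j * (u j - u y) = ∑ j, (p j * u j - p j * u y) :=
          Finset.sum_congr rfl fun j _ => by ring
        rw [this, Finset.sum_sub_distrib, ← Finset.sum_mul, hps, one_mul]
      have e2 : ∑ j, p j * u j
          = (1 + v y) * u y + ∑ j ∈ Finset.univ.erase y, v j * u j := by
        rw [← Finset.add_sum_erase _ (fun j => p j * u j) (Finset.mem_univ y), hpy]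
        congr 1
        exact Finset.sum_congr rfl fun j hj => by rw [hpj j hj]
      have e3 : ∑ j, u j * v j
          = u y * v y + ∑ j ∈ Finset.univ.erase y, v j * u j := by
        rw [← Finset.add_sum_erase _ (fun j => u j * v j) (Finset.mem_univ y)]
        congr 1
        exact Finset.sum_congr rfl fun j _ => by ring
      have h1 : ∑ j, u j * v j = ∑ j, p j * (u j - u y) := by
        rw [e1, e2, e3]; ring
      have hg := auxGibbs p (fun j => u j - u y) hpnn hps
      rw [h1, ← hSdef] at *
      linarith
    apply le_antisymm
    · exact iSup_le fun u => by exact_mod_cast hub u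
    · -- lower bound
      set k : ℕ := (Finset.univ.filter (fun j => p j = 0)).card with hk
      set U : ℝ → (Fin m → ℝ) :=
        fun t j => if p j = 0 then -t else Real.log (p j) with hU
      have hval : ∀ t : ℝ,
          ∑ j, U t j * v j - Real.log (∑ j, Real.exp (U t j - U t y))
            = S - Real.log (1 + (k:ℝ) * Real.exp (-t)) := by
        intro t
        have hkpos : (0:ℝ) < 1 + (k:ℝ) * Real.exp (-t) :=
            add_pos_of_pos_of_nonneg one_pos (mul_nonneg (Nat.cast_nonneg _) (Real.exp_pos _).le)
        have hsum1 : ∑ j, U t j * p j = S := by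
          rw [hSdef]
          refine Finset.sum_congr rfl fun j _ => ?_
          by_cases h0 : p j = 0
          · simp [hU, h0]
          · simp only [hU, if_neg h0]; ring
        have e2 : ∑ j, U t j * p j
            = U t y * (1 + v y) + ∑ j ∈ Finset.univ.erase y, U t j * v j := by
          rw [← Finset.add_sum_erase _ (fun j => U t j * p j) (Finset.mem_univ y), hpy]
          congr 1
          exact Finset.sum_congr rfl fun j hj => by rw [hpj j hj]
        have e3 : ∑ j, U t j * v j
            = U t y * v y + ∑ j ∈ Finset.univ.erase y, U t j * v j := by
          rw [← Finset.add_sum_erase _ (fun j => U t j * v j) (Finset.mem_univ y)]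
        have hsum2 : ∑ j, U t j * v j = S - U t y := by
          rw [e3]; rw [e2] at hsum1; linarith
        have hexp : ∑ j, Real.exp (U t j) = 1 + (k:ℝ) * Real.exp (-t) := by
          have step : ∀ j, Real.exp (U t j)
              = (if p j = 0 then Real.exp (-t) else 0) + p j := by
            intro j
            by_cases h0 : p j = 0
            · simp [hU, h0]
            · have hpj' : 0 < p j := lt_of_le_of_ne (hpnn j) (Ne.symm h0)
              simp [hU, h0, Real.exp_log hpj']
          rw [Finset.sum_congr rfl fun j _ => step j, Finset.sum_add_distrib, hps,
            ← Finset.sum_filter, Finset.sum_const, nsmul_eq_mul, ← hk]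
          ring
        have hexp2 : ∑ j, Real.exp (U t j - U t y)
            = (1 + (k:ℝ) * Real.exp (-t)) / Real.exp (U t y) := by
          rw [← hexp, Finset.sum_div]
          exact Finset.sum_congr rfl fun j _ => Real.exp_sub _ _
        rw [hsum2, hexp2, Real.log_div hkpos.ne' (Real.exp_ne_zero _), Real.log_exp]
        ring
      refine le_of_forall_lt fun c hc => ?_
      rcases auxERealCases c with rfl | ⟨r, rfl⟩ | rfl
      · exact lt_of_lt_of_le (EReal.bot_lt_coe _)
          (le_iSup (fun u : Fin m → ℝ =>
            ((∑ j, u j * v j - Real.log (∑ j, Real.exp (u j - u y)) : ℝ) : EReal)) (U 0))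
      · have hr : r < S := by exact_mod_cast hc
        set ε : ℝ := S - r with hε
        have hεpos : 0 < ε := by simp [hε]; linarith
        set t : ℝ := Real.log (((k:ℝ) + 1) / ε) with ht
        have hk1 : (0:ℝ) < (k:ℝ) + 1 := Nat.cast_add_one_pos k
        have het : Real.exp (-t) = ε / ((k:ℝ) + 1) := by
          rw [ht, ← Real.log_inv, Real.exp_log (inv_pos.mpr (div_pos hk1 hεpos)), inv_div]
        have h1 : (k:ℝ) * Real.exp (-t) < ε := by
          rw [het, mul_div_assoc']
          rw [div_lt_iff₀ hk1]
          nlinarith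
        have h2 : Real.log (1 + (k:ℝ) * Real.exp (-t)) ≤ (k:ℝ) * Real.exp (-t) := by
          have := Real.log_le_sub_one_of_pos
            (show (0:ℝ) < 1 + (k:ℝ) * Real.exp (-t) from
              add_pos_of_pos_of_nonneg one_pos (mul_nonneg (Nat.cast_nonneg _) (Real.exp_pos _).le))
          linarith
        have hgt : r < ∑ j, U t j * v j
            - Real.log (∑ j, Real.exp (U t j - U t y)) := by
          rw [hval t]; linarith
        exact lt_of_lt_of_le (by exact_mod_cast hgt)
          (le_iSup (fun u : Fin m → ℝ =>
            ((∑ j, u j * v j - Real.log (∑ j, Real.exp (u j - u y)) : ℝ) : EReal)) (U t))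
      · exact absurd hc (by simp)
  · -- infinite case
    rw [if_neg hP]
    apply auxSupTop
    intro M
    by_cases hA : ∑ j, v j = 0
    · by_cases hneg : ∃ j, j ≠ y ∧ v j < 0
      · obtain ⟨j, hjy, hvj⟩ := hneg
        set t : ℝ := max 0 ((M + Real.log m) / (-v j)) with ht
        have ht0 : 0 ≤ t := le_max_left _ _
        refine ⟨fun i => if i = j then -t else 0, ?_⟩
        show M ≤ ∑ i, (if i = j then -t else 0) * v i
          - Real.log (∑ i, Real.exp ((if i = j then -t else 0) - (if y = j then -t else 0)))
        have hsum : ∑ i, (if i = j then -t else 0) * v i = -t * v j := by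
          rw [Finset.sum_eq_single j (fun b _ hb => by simp [hb]) (by simp)]
          simp
        have hlog : Real.log (∑ i, Real.exp ((if i = j then -t else 0)
            - (if y = j then -t else 0))) ≤ Real.log m + 0 := by
          apply logsum
          intro i
          rw [if_neg (Ne.symm hjy), sub_zero]
          split <;> linarith
        have hmul : M + Real.log m ≤ -t * v j := by
          have h1 : (M + Real.log m) / (-v j) ≤ t := le_max_right _ _
          have h2 : ((M + Real.log m) / (-v j)) * (-v j) ≤ t * (-v j) :=
            mul_le_mul_of_nonneg_right h1 (by linarith)
          rw [div_mul_cancel₀ _ (by linarith : -v j ≠ 0)] at h2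
          linarith
        rw [hsum]; linarith
      · push_neg at hneg
        have hs : 1 < ∑ i ∈ Finset.univ.erase y, v i := by
          by_contra hle
          push_neg at hle
          refine hP ⟨hA, hle, fun i hi => ⟨hneg i hi, ?_⟩⟩
          exact le_trans (Finset.single_le_sum
            (fun b hb => hneg b (Finset.ne_of_mem_erase hb))
            (Finset.mem_erase.mpr ⟨hi, Finset.mem_univ i⟩)) hle
        set s : ℝ := ∑ i ∈ Finset.univ.erase y, v i with hsdef
        set t : ℝ := max 0 ((M + Real.log m) / (s - 1)) with ht
        have ht0 : 0 ≤ t := le_max_left _ _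
        refine ⟨fun i => if i = y then 0 else t, ?_⟩
        show M ≤ ∑ i, (if i = y then 0 else t) * v i
          - Real.log (∑ i, Real.exp ((if i = y then 0 else t) - (if y = y then 0 else t)))
        have hsum : ∑ i, (if i = y then 0 else t) * v i = t * s := by
          rw [← Finset.add_sum_erase _ (fun i => (if i = y then 0 else t) * v i)
            (Finset.mem_univ y), if_pos rfl, zero_mul, zero_add,
            Finset.sum_congr rfl (fun i hi => by
              rw [if_neg (Finset.ne_of_mem_erase hi)]), ← Finset.mul_sum]
        have hlog : Real.log (∑ i, Real.exp ((if i = y then 0 else t)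
            - (if y = y then 0 else t))) ≤ Real.log m + t := by
          apply logsum
          intro i
          rw [if_pos rfl, sub_zero]
          split <;> linarith
        have hmul : M + Real.log m ≤ t * (s - 1) := by
          have h1 : (M + Real.log m) / (s - 1) ≤ t := le_max_right _ _
          have h2 : ((M + Real.log m) / (s - 1)) * (s - 1) ≤ t * (s - 1) :=
            mul_le_mul_of_nonneg_right h1 (by linarith)
          rw [div_mul_cancel₀ _ (by linarith : s - 1 ≠ 0)] at h2
          linarith
        rw [hsum]; nlinarith
    · set c : ℝ := (M + Real.log m) / (∑ j, v j) with hc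
      refine ⟨fun _ => c, ?_⟩
      show M ≤ ∑ i, c * v i - Real.log (∑ i : Fin m, Real.exp (c - c))
      have h1 : ∑ i, c * v i = M + Real.log m := by
        rw [← Finset.mul_sum, hc, div_mul_cancel₀ _ hA]
      have h2 : ∑ i : Fin m, Real.exp (c - c) = (m:ℝ) := by
        simp [Finset.card_univ]
      rw [h1, h2]; linarith
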